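/- For a, b ∈ ℝ and σ > 0, the L₁ distance between shifted Gaussian densities satisfies ∫_ℝ |φ_σ(y − a) − φ_σ(y − b)| dy ≤ √(2/π) · |a − b| / σ. -/

import Mathlib

open MeasureTheory Real Set

/-- Gaussian density with mean 0 and standard deviation σ. -/
noncomputable def gauss (σ t : ℝ) : ℝ :=
  (Real.sqrt (2 * Real.pi) * σ)⁻¹ * Real.exp (-(t ^ 2) / (2 * σ ^ 2))

lemma gauss_nonneg {σ : ℝ} (hσ : 0 < σ) (t : ℝ) : 0 ≤ gauss σ t := by
  have h : 0 < Real.sqrt (2 * Real.pi) := Real.sqrt_pos.2 (by positivity)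
  unfold gauss
  positivity

lemma continuous_gauss (σ : ℝ) : Continuous (gauss σ) := by
  unfold gauss
  fun_prop

lemma gauss_eq (σ t : ℝ) :
    gauss σ t = (Real.sqrt (2 * Real.pi) * σ)⁻¹ * Real.exp (-(2 * σ ^ 2)⁻¹ * t ^ 2) := by
  unfold gauss
  congr 1
  ring_nf

lemma integrable_gauss {σ : ℝ} (hσ : 0 < σ) : Integrable (gauss σ) := by
  have : gauss σ = fun t => (Real.sqrt (2 * Real.pi) * σ)⁻¹ *
      Real.exp (-(2 * σ ^ 2)⁻¹ * t ^ 2) := funext (gauss_eq σ)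
  rw [this]
  exact (integrable_exp_neg_mul_sq (by positivity)).const_mul _

lemma integrable_abs_mul_gauss {σ : ℝ} (hσ : 0 < σ) :
    Integrable (fun t => |t| * gauss σ t) := by
  simp_rw [gauss_eq, show ∀ t : ℝ, |t| * ((Real.sqrt (2 * Real.pi) * σ)⁻¹ *
      Real.exp (-(2 * σ ^ 2)⁻¹ * t ^ 2)) = (Real.sqrt (2 * Real.pi) * σ)⁻¹ *
      (|t| * Real.exp (-(2 * σ ^ 2)⁻¹ * t ^ 2)) from fun t => by ring]
  refine Integrable.const_mul ?_ _
  have h := (integrable_mul_exp_neg_mul_sq (b := (2 * σ ^ 2)⁻¹) (by positivity)).abs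
  refine h.congr ?_
  filter_upwards with t
  rw [abs_mul, abs_of_pos (Real.exp_pos _)]

lemma hasDerivAt_gauss {σ : ℝ} (hσ : 0 < σ) (t : ℝ) :
    HasDerivAt (gauss σ) (-(t / σ ^ 2) * gauss σ t) t := by
  have hu : HasDerivAt (fun t : ℝ => -(t ^ 2) / (2 * σ ^ 2))
      (-(2 * t ^ 1) / (2 * σ ^ 2)) t := ((hasDerivAt_pow 2 t).neg).div_const _
  have h := ((hu.exp).const_mul ((Real.sqrt (2 * Real.pi) * σ)⁻¹))
  refine h.congr_deriv ?_
  unfold gauss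
  have hσ2 : σ ^ 2 ≠ 0 := by positivity
  field_simp

lemma tendsto_gauss_atTop {σ : ℝ} (hσ : 0 < σ) :
    Filter.Tendsto (gauss σ) Filter.atTop (nhds 0) := by
  have h1 : Filter.Tendsto (fun t : ℝ => t ^ 2 / (2 * σ ^ 2)) Filter.atTop Filter.atTop :=
    Filter.Tendsto.atTop_div_const (by positivity) (Filter.tendsto_pow_atTop two_ne_zero)
  have h2 : Filter.Tendsto (fun t : ℝ => -(t ^ 2) / (2 * σ ^ 2)) Filter.atTop Filter.atBot := by
    simp_rw [neg_div]
    exact Filter.tendsto_neg_atBot_iff.mpr h1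
  have h3 := Real.tendsto_exp_atBot.comp h2
  have h4 := h3.const_mul ((Real.sqrt (2 * Real.pi) * σ)⁻¹)
  rw [mul_zero] at h4
  exact h4

lemma integral_Ioi_mul_gauss {σ : ℝ} (hσ : 0 < σ) :
    ∫ t in Ioi (0 : ℝ), t * gauss σ t = σ ^ 2 * gauss σ 0 := by
  have hσ2 : (σ : ℝ) ^ 2 ≠ 0 := by positivity
  have hderiv : ∀ x ∈ Ici (0 : ℝ),
      HasDerivAt (fun t => -σ ^ 2 * gauss σ t) (x * gauss σ x) x := by
    intro x _
    have := (hasDerivAt_gauss hσ x).const_mul (-σ ^ 2)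
    refine this.congr_deriv ?_
    field_simp
  have hint : IntegrableOn (fun t : ℝ => t * gauss σ t) (Ioi 0) := by
    refine ((integrable_abs_mul_gauss hσ).integrableOn).congr_fun ?_ measurableSet_Ioi
    intro x hx
    show |x| * gauss σ x = x * gauss σ x
    rw [abs_of_pos (mem_Ioi.1 hx)]
  have htends : Filter.Tendsto (fun t => -σ ^ 2 * gauss σ t) Filter.atTop (nhds 0) := by
    have := (tendsto_gauss_atTop hσ).const_mul (-σ ^ 2)
    simpa using this
  have := integral_Ioi_of_hasDerivAt_of_tendsto' hderiv hint htends
  rw [this]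
  ring

lemma sqrt_two_div_pi_eq : Real.sqrt (2 / Real.pi) * Real.sqrt (2 * Real.pi) = 2 := by
  rw [← Real.sqrt_mul (by positivity)]
  have hπ : Real.pi ≠ 0 := Real.pi_ne_zero
  rw [show 2 / Real.pi * (2 * Real.pi) = 4 by field_simp; ring]
  rw [show (4 : ℝ) = 2 ^ 2 by norm_num, Real.sqrt_sq (by norm_num)]

lemma integral_abs_mul_gauss {σ : ℝ} (hσ : 0 < σ) :
    ∫ t, |t| * gauss σ t = Real.sqrt (2 / Real.pi) * σ := by
  have h1 : ∀ t : ℝ, |t| * gauss σ t = |t| * gauss σ |t| := by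
    intro t
    unfold gauss
    rw [sq_abs]
  simp_rw [h1]
  rw [integral_comp_abs (f := fun t => t * gauss σ t), integral_Ioi_mul_gauss hσ]
  unfold gauss
  have hs : (0 : ℝ) < Real.sqrt (2 * Real.pi) := Real.sqrt_pos.2 (by positivity)
  have h2 : Real.sqrt (2 / Real.pi) = 2 / Real.sqrt (2 * Real.pi) := by
    rw [eq_div_iff hs.ne']
    exact sqrt_two_div_pi_eq
  norm_num [Real.exp_zero, h2]
  field_simp

/-- the function `h u = |u / σ² * gauss σ u|` -/
noncomputable def gaussD (σ u : ℝ) : ℝ := |u / σ ^ 2 * gauss σ u|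

lemma gaussD_eq {σ : ℝ} (hσ : 0 < σ) (u : ℝ) :
    gaussD σ u = (σ ^ 2)⁻¹ * (|u| * gauss σ u) := by
  unfold gaussD
  rw [abs_mul, abs_div, abs_of_nonneg (gauss_nonneg hσ u), abs_of_pos (show (0:ℝ) < σ ^ 2 by positivity)]
  ring

lemma integrable_gaussD {σ : ℝ} (hσ : 0 < σ) : Integrable (gaussD σ) := by
  have := (integrable_abs_mul_gauss hσ).const_mul ((σ ^ 2)⁻¹)
  refine this.congr ?_
  filter_upwards with u
  rw [gaussD_eq hσ]

lemma gaussD_nonneg (σ u : ℝ) : 0 ≤ gaussD σ u := abs_nonneg _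

lemma integral_gaussD {σ : ℝ} (hσ : 0 < σ) :
    ∫ u, gaussD σ u = Real.sqrt (2 / Real.pi) / σ := by
  have h : ∫ u, gaussD σ u = (σ ^ 2)⁻¹ * ∫ u, |u| * gauss σ u := by
    rw [← integral_const_mul]
    congr 1
    funext u
    rw [gaussD_eq hσ]
  rw [h, integral_abs_mul_gauss hσ]
  have hσ' : σ ≠ 0 := ne_of_gt hσ
  field_simp

lemma continuous_gaussD (σ : ℝ) : Continuous (gaussD σ) := by
  unfold gaussD
  exact (((continuous_id.div_const _).mul (continuous_gauss σ))).abs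

/-- Key pointwise bound via FTC. -/
lemma pointwise_bound {σ : ℝ} (hσ : 0 < σ) {a b : ℝ} (hab : a ≤ b) (y : ℝ) :
    |gauss σ (y - a) - gauss σ (y - b)| ≤ ∫ t in Ioc a b, gaussD σ (y - t) := by
  have hd : ∀ t : ℝ, HasDerivAt (fun t => gauss σ (y - t))
      ((y - t) / σ ^ 2 * gauss σ (y - t)) t := by
    intro t
    have h2 : HasDerivAt (fun t : ℝ => y - t) (-1) t := (hasDerivAt_id t).const_sub y
    have := (hasDerivAt_gauss hσ (y - t)).comp t h2
    refine this.congr_deriv ?_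
    ring
  have hcont : Continuous (fun t : ℝ => (y - t) / σ ^ 2 * gauss σ (y - t)) := by
    exact (((continuous_const.sub continuous_id).div_const _).mul
      ((continuous_gauss σ).comp (continuous_const.sub continuous_id)))
  have hint : IntervalIntegrable (fun t : ℝ => (y - t) / σ ^ 2 * gauss σ (y - t))
      volume a b := hcont.intervalIntegrable a b
  have heq := intervalIntegral.integral_eq_sub_of_hasDerivAt (fun t _ => hd t) hint
  have h1 : |gauss σ (y - a) - gauss σ (y - b)|
      = |∫ t in a..b, (y - t) / σ ^ 2 * gauss σ (y - t)| := by
    rw [heq, abs_sub_comm]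
  rw [h1]
  calc |∫ t in a..b, (y - t) / σ ^ 2 * gauss σ (y - t)|
      ≤ ∫ t in a..b, |(y - t) / σ ^ 2 * gauss σ (y - t)| :=
        intervalIntegral.abs_integral_le_integral_abs hab
    _ = ∫ t in Ioc a b, gaussD σ (y - t) := by
        rw [intervalIntegral.integral_of_le hab]
        rfl

lemma key_lemma {σ : ℝ} (hσ : 0 < σ) {a b : ℝ} (hab : a ≤ b) :
    ∫ y, |gauss σ (y - a) - gauss σ (y - b)|
      ≤ Real.sqrt (2 / Real.pi) * (b - a) / σ := by
  set C : ℝ := Real.sqrt (2 / Real.pi) / σ with hC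
  have hC0 : 0 ≤ C := by positivity
  -- rewrite LHS as toReal of a lintegral
  have hm : Continuous (fun y => |gauss σ (y - a) - gauss σ (y - b)|) := by
    exact (((continuous_gauss σ).comp (continuous_id.sub continuous_const)).sub
      ((continuous_gauss σ).comp (continuous_id.sub continuous_const))).abs
  rw [integral_eq_lintegral_of_nonneg_ae (Filter.Eventually.of_forall fun y => abs_nonneg _)
    hm.aestronglyMeasurable]
  have hRHS : 0 ≤ Real.sqrt (2 / Real.pi) * (b - a) / σ := by
    have : 0 ≤ b - a := sub_nonneg.2 hab
    positivity
  refine ENNReal.toReal_le_of_le_ofReal hRHS ?_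
  -- chain of lintegral inequalities
  have step1 : ∀ y : ℝ, ENNReal.ofReal |gauss σ (y - a) - gauss σ (y - b)|
      ≤ ∫⁻ t in Ioc a b, ENNReal.ofReal (gaussD σ (y - t)) := by
    intro y
    have hint : IntegrableOn (fun t => gaussD σ (y - t)) (Ioc a b) :=
      ((continuous_gaussD σ).comp (continuous_const.sub continuous_id)).integrableOn_Ioc
    calc ENNReal.ofReal |gauss σ (y - a) - gauss σ (y - b)|
        ≤ ENNReal.ofReal (∫ t in Ioc a b, gaussD σ (y - t)) :=
          ENNReal.ofReal_le_ofReal (pointwise_bound hσ hab y)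
      _ = ∫⁻ t in Ioc a b, ENNReal.ofReal (gaussD σ (y - t)) :=
          ofReal_integral_eq_lintegral_ofReal hint
            (Filter.Eventually.of_forall fun t => gaussD_nonneg σ _)
  have hmeas : AEMeasurable (Function.uncurry fun y t => ENNReal.ofReal (gaussD σ (y - t)))
      ((volume : Measure ℝ).prod ((volume : Measure ℝ).restrict (Ioc a b))) := by
    apply Measurable.aemeasurable
    apply ENNReal.measurable_ofReal.comp
    exact ((continuous_gaussD σ).comp (continuous_fst.sub continuous_snd)).measurable
  have swap : ∫⁻ y, ∫⁻ t in Ioc a b, ENNReal.ofReal (gaussD σ (y - t))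
      = ∫⁻ t in Ioc a b, ∫⁻ y, ENNReal.ofReal (gaussD σ (y - t)) :=
    lintegral_lintegral_swap hmeas
  have inner : ∀ t : ℝ, ∫⁻ y, ENNReal.ofReal (gaussD σ (y - t)) = ENNReal.ofReal C := by
    intro t
    rw [← ofReal_integral_eq_lintegral_ofReal ((integrable_gaussD hσ).comp_sub_right t)
      (Filter.Eventually.of_forall fun y => gaussD_nonneg σ _)]
    rw [integral_sub_right_eq_self (gaussD σ) t, integral_gaussD hσ]
  calc ∫⁻ y, ENNReal.ofReal |gauss σ (y - a) - gauss σ (y - b)|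
      ≤ ∫⁻ y, ∫⁻ t in Ioc a b, ENNReal.ofReal (gaussD σ (y - t)) :=
        lintegral_mono step1
    _ = ∫⁻ t in Ioc a b, ∫⁻ y, ENNReal.ofReal (gaussD σ (y - t)) := swap
    _ = ∫⁻ _ in Ioc a b, ENNReal.ofReal C := by
        exact setLIntegral_congr_fun measurableSet_Ioc
          (fun t _ => inner t)
    _ = ENNReal.ofReal C * ENNReal.ofReal (b - a) := by
        rw [setLIntegral_const, Real.volume_Ioc]
    _ = ENNReal.ofReal (C * (b - a)) := (ENNReal.ofReal_mul hC0).symm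
    _ = ENNReal.ofReal (Real.sqrt (2 / Real.pi) * (b - a) / σ) := by
        congr 1
        rw [hC]
        ring

/-- L₁ distance between two shifted Gaussian densities. -/
theorem stmt_9 (a b σ : ℝ) (hσ : 0 < σ) :
    ∫ y, |gauss σ (y - a) - gauss σ (y - b)|
      ≤ Real.sqrt (2 / Real.pi) * |a - b| / σ := by
  rcases le_total a b with hab | hab
  · have := key_lemma hσ hab
    rwa [abs_sub_comm, abs_of_nonneg (sub_nonneg.2 hab)]
  · have := key_lemma hσ hab
    rw [abs_of_nonneg (sub_nonneg.2 hab)]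
    simp_rw [abs_sub_comm (gauss σ (_ - a))]
    exact this
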